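/- Let $f, g, h$ be nonnegative locally integrable functions on $(t_0, \infty)$ such that $f' (t) \le g(t) f(t) + h(t)$ for all $t \ge t_0$ (with $f$ differentiable), and suppose there exist positive constants $r, a_1, a_2, a_3$ with $\int_t^{t+r} f \le a_1$, $\int_t^{t+r} g \le a_2$, $\int_t^{t+r} h \le a_3$ for all $t \ge t_0$. Then $f(t+r) \le (a_1/r + a_3) e^{a_2}$ for all $t \ge t_0$. -/

import Mathlib

open MeasureTheory intervalIntegral Finset Filter Topology

lemma ug_sum_pow_le (k : ℕ) : ∀ n : ℕ, (∑ i ∈ Finset.range n, ((i : ℝ) + 1) ^ k)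
    ≤ ((n : ℝ) + 1) ^ (k + 1) / (k + 1) := by
  intro n
  induction n with
  | zero => simp; positivity
  | succ n ih =>
      rw [Finset.sum_range_succ, Nat.cast_succ]
      have hpos : (0:ℝ) < (k:ℝ) + 1 := by positivity
      rw [le_div_iff₀ hpos] at ih ⊢
      have hb : (1 + ((k:ℝ)+1) * (1/((n:ℝ)+1))) ≤ (1 + 1/((n:ℝ)+1)) ^ (k+1) := by
        have := one_add_mul_le_pow (a := 1/((n:ℝ)+1))
          (le_trans (by norm_num : (-2:ℝ) ≤ 0) (by positivity)) (k+1)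
        simpa [mul_comm] using this
      have hn1 : (0:ℝ) < (n:ℝ) + 1 := by positivity
      have key : ((n:ℝ)+1) ^ (k+1) + ((k:ℝ)+1) * ((n:ℝ)+1)^k ≤ ((n:ℝ)+1+1) ^ (k+1) := by
        have h2 : ((n:ℝ)+1+1) = ((n:ℝ)+1) * (1 + 1/((n:ℝ)+1)) := by field_simp
        rw [h2, mul_pow]
        calc ((n:ℝ)+1) ^ (k+1) + ((k:ℝ)+1) * ((n:ℝ)+1)^k
            = ((n:ℝ)+1)^(k+1) * (1 + ((k:ℝ)+1) * (1/((n:ℝ)+1))) := by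
              field_simp; ring
          _ ≤ ((n:ℝ)+1)^(k+1) * (1 + 1/((n:ℝ)+1)) ^ (k+1) := by
              apply mul_le_mul_of_nonneg_left hb (by positivity)
      nlinarith [ih, key]

lemma ug_key (g : ℝ → ℝ) {s u : ℝ} (hsu : s ≤ u)
    (hg0 : ∀ τ ∈ Set.Icc s u, 0 ≤ g τ)
    (hgint : IntervalIntegrable g volume s u) (k : ℕ) :
    (∫ τ in s..u, g τ * (∫ x in s..τ, g x) ^ k)
      ≤ (∫ x in s..u, g x) ^ (k + 1) / (k + 1) := by
  set G : ℝ → ℝ := fun τ => ∫ x in s..τ, g x with hG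
  have huIcc : Set.uIcc s u = Set.Icc s u := Set.uIcc_of_le hsu
  have hint : ∀ τ₁ τ₂, τ₁ ∈ Set.Icc s u → τ₂ ∈ Set.Icc s u →
      IntervalIntegrable g volume τ₁ τ₂ := by
    intro τ₁ τ₂ h1 h2
    refine hgint.mono_set ?_
    exact Set.uIcc_subset_uIcc (huIcc.symm ▸ h1) (huIcc.symm ▸ h2)
  have hGsub : ∀ τ₁ τ₂, τ₁ ∈ Set.Icc s u → τ₂ ∈ Set.Icc s u →
      G τ₂ - G τ₁ = ∫ x in τ₁..τ₂, g x := by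
    intro τ₁ τ₂ h1 h2
    have := integral_add_adjacent_intervals (μ := volume) (f := g)
      (hint s τ₁ (Set.left_mem_Icc.2 hsu) h1) (hint τ₁ τ₂ h1 h2)
    simp only [hG]
    linarith [this]
  have hGmono : ∀ τ₁ τ₂, τ₁ ∈ Set.Icc s u → τ₂ ∈ Set.Icc s u → τ₁ ≤ τ₂ →
      G τ₁ ≤ G τ₂ := by
    intro τ₁ τ₂ h1 h2 h12
    have h0 : 0 ≤ ∫ x in τ₁..τ₂, g x := by
      apply intervalIntegral.integral_nonneg h12
      intro x hx
      exact hg0 x ⟨le_trans h1.1 hx.1, le_trans hx.2 h2.2⟩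
    linarith [hGsub τ₁ τ₂ h1 h2]
  have hGcont : ContinuousOn G (Set.Icc s u) := by
    have := intervalIntegral.continuousOn_primitive_interval' (μ := volume) (f := g)
      (b₁ := s) (b₂ := u) hgint (by rw [huIcc]; exact Set.left_mem_Icc.2 hsu)
    rwa [huIcc] at this
  have hGs : G s = 0 := intervalIntegral.integral_same
  set A : ℝ := G u with hA
  have hA0 : 0 ≤ A := by
    have := hGmono s u (Set.left_mem_Icc.2 hsu) (Set.right_mem_Icc.2 hsu) hsu
    rw [hGs] at this; exact this
  have hGle : ∀ τ ∈ Set.Icc s u, G τ ∈ Set.Icc 0 A := by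
    intro τ hτ
    constructor
    · have := hGmono s τ (Set.left_mem_Icc.2 hsu) hτ hτ.1
      rwa [hGs] at this
    · exact hGmono τ u hτ (Set.right_mem_Icc.2 hsu) hτ.2
  rcases eq_or_lt_of_le hA0 with hA0' | hApos
  · -- A = 0 case
    have hEq : Set.EqOn (fun τ => g τ * G τ ^ k) (fun τ => g τ * 0 ^ k) (Set.uIcc s u) := by
      intro τ hτ
      rw [huIcc] at hτ
      have h1 := hGle τ hτ
      have : G τ = 0 := le_antisymm (hA0' ▸ h1.2) h1.1
      simp only [this]
    rw [intervalIntegral.integral_congr hEq]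
    rw [intervalIntegral.integral_mul_const]
    have hAe : (∫ x in s..u, g x) = A := rfl
    rw [hAe, ← hA0']
    simp
  · -- A > 0 case
    have hmain : ∀ n : ℕ, 1 ≤ n →
        (∫ τ in s..u, g τ * G τ ^ k) ≤ (A * ((n:ℝ)+1) / n) ^ (k+1) / (k+1) := by
      intro n hn
      have hn0 : (0:ℝ) < n := by exact_mod_cast hn
      -- choose partition points
      have hτex : ∀ i : ℕ, ∃ τ, τ ∈ Set.Icc s u ∧ G τ = (min i n : ℕ) * A / n ∧
          (i = 0 → τ = s) ∧ (n ≤ i → τ = u) := by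
        intro i
        rcases eq_or_ne i 0 with rfl | h0
        · exact ⟨s, Set.left_mem_Icc.2 hsu, by simp [hGs], fun _ => rfl,
            fun hni => absurd hni (by omega)⟩
        rcases le_or_gt n i with hni | hni
        · refine ⟨u, Set.right_mem_Icc.2 hsu, ?_, fun h => absurd h h0, fun _ => rfl⟩
          rw [min_eq_right hni]
          field_simp
          rfl
        · have hc : ((min i n : ℕ) : ℝ) * A / n ∈ Set.Icc (0:ℝ) A := by
            rw [min_eq_left hni.le]
            constructor
            · positivity
            · rw [div_le_iff₀ hn0]
              have : (i:ℝ) ≤ (n:ℝ) := by exact_mod_cast hni.le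
              nlinarith
          have := intermediate_value_Icc hsu hGcont
          rw [hGs, ← hA] at this
          obtain ⟨τ, hτ1, hτ2⟩ := this hc
          exact ⟨τ, hτ1, hτ2, fun h => absurd h h0, fun h => absurd h (by omega)⟩
      set τ : ℕ → ℝ := fun i => (hτex i).choose with hτdef
      have hτmem : ∀ i, τ i ∈ Set.Icc s u := fun i => (hτex i).choose_spec.1
      have hτG : ∀ i, i ≤ n → G (τ i) = (i:ℝ) * A / n := by
        intro i hi
        refine ((hτex i).choose_spec.2.1).trans ?_
        rw [min_eq_left hi]
      have hτ0 : τ 0 = s := (hτex 0).choose_spec.2.2.1 rfl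
      have hτn : τ n = u := (hτex n).choose_spec.2.2.2 le_rfl
      have hτord : ∀ i j, i < j → j ≤ n → τ i ≤ τ j := by
        intro i j hij hjn
        by_contra hc
        push_neg at hc
        have h1 := hGmono (τ j) (τ i) (hτmem j) (hτmem i) hc.le
        rw [hτG i (le_trans hij.le hjn), hτG j hjn] at h1
        have : (i:ℝ) < (j:ℝ) := by exact_mod_cast hij
        rw [div_le_div_iff₀ hn0 hn0] at h1
        have hAn : 0 < A * (n:ℝ) := mul_pos hApos hn0
        nlinarith
      -- integrability of the integrand on subintervals
      have hintg : ∀ i < n, IntervalIntegrable (fun τ' => g τ' * G τ' ^ k) volume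
          (τ i) (τ (i+1)) := by
        intro i hi
        have hsub : Set.uIcc (τ i) (τ (i+1)) ⊆ Set.Icc s u := by
          rw [← huIcc]
          exact Set.uIcc_subset_uIcc (huIcc ▸ hτmem i) (huIcc ▸ hτmem (i+1))
        exact (hint (τ i) (τ (i+1)) (hτmem i) (hτmem (i+1))).mul_continuousOn
          ((hGcont.mono hsub).pow k)
      have hsplit : (∫ τ' in s..u, g τ' * G τ' ^ k)
          = ∑ i ∈ Finset.range n, ∫ τ' in τ i..τ (i+1), g τ' * G τ' ^ k := by
        rw [intervalIntegral.sum_integral_adjacent_intervals hintg, hτ0, hτn]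
      have hpiece : ∀ i < n, (∫ τ' in τ i..τ (i+1), g τ' * G τ' ^ k)
          ≤ (((i:ℝ)+1) * A / n) ^ k * (A / n) := by
        intro i hi
        have hi1n : i + 1 ≤ n := hi
        have hord := hτord i (i+1) (Nat.lt_succ_self i) hi1n
        have hGi1 : G (τ (i+1)) = ((i:ℝ)+1) * A / n := by
          have := hτG (i+1) hi1n
          push_cast at this
          exact this
        have hbound : ∀ x ∈ Set.Icc (τ i) (τ (i+1)),
            g x * G x ^ k ≤ g x * ((((i:ℝ)+1) * A / n) ^ k) := by
          intro x hx
          have hxmem : x ∈ Set.Icc s u :=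
            ⟨le_trans (hτmem i).1 hx.1, le_trans hx.2 (hτmem (i+1)).2⟩
          have hGx := hGle x hxmem
          have hGxle : G x ≤ ((i:ℝ)+1) * A / n := by
            rw [← hGi1]
            exact hGmono x (τ (i+1)) hxmem (hτmem (i+1)) hx.2
          exact mul_le_mul_of_nonneg_left (pow_le_pow_left₀ hGx.1 hGxle k) (hg0 x hxmem)
        have hint1 := hintg i hi
        have hint2 : IntervalIntegrable (fun x => g x * ((((i:ℝ)+1) * A / n) ^ k))
            volume (τ i) (τ (i+1)) :=
          (hint (τ i) (τ (i+1)) (hτmem i) (hτmem (i+1))).mul_const _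
        calc (∫ τ' in τ i..τ (i+1), g τ' * G τ' ^ k)
            ≤ ∫ x in τ i..τ (i+1), g x * ((((i:ℝ)+1) * A / n) ^ k) :=
              intervalIntegral.integral_mono_on hord hint1 hint2 hbound
          _ = (∫ x in τ i..τ (i+1), g x) * ((((i:ℝ)+1) * A / n) ^ k) :=
              intervalIntegral.integral_mul_const _ _
          _ = (((i:ℝ)+1) * A / n) ^ k * (A / n) := by
              rw [← hGsub (τ i) (τ (i+1)) (hτmem i) (hτmem (i+1)), hGi1,
                hτG i (le_trans (Nat.le_succ i) hi1n)]
              ring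
      calc (∫ τ' in s..u, g τ' * G τ' ^ k)
          = ∑ i ∈ Finset.range n, ∫ τ' in τ i..τ (i+1), g τ' * G τ' ^ k := hsplit
        _ ≤ ∑ i ∈ Finset.range n, (((i:ℝ)+1) * A / n) ^ k * (A / n) :=
            Finset.sum_le_sum (fun i hi => hpiece i (Finset.mem_range.1 hi))
        _ = (A / n) ^ (k+1) * ∑ i ∈ Finset.range n, ((i:ℝ)+1) ^ k := by
            rw [Finset.mul_sum]
            apply Finset.sum_congr rfl
            intro i _
            rw [mul_div_assoc, mul_pow, pow_succ]
            ring
        _ ≤ (A / n) ^ (k+1) * (((n:ℝ)+1) ^ (k+1) / (k+1)) := by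
            apply mul_le_mul_of_nonneg_left (ug_sum_pow_le k n) (by positivity)
        _ = (A * ((n:ℝ)+1) / n) ^ (k+1) / (k+1) := by
            rw [div_pow, div_pow, mul_pow]
            field_simp
    -- take limit n → ∞
    have htend : Tendsto (fun n : ℕ => (A * ((n:ℝ)+1) / n) ^ (k+1) / (k+1)) atTop
        (𝓝 (A ^ (k+1) / (k+1))) := by
      have h1 : Tendsto (fun n : ℕ => A * ((n:ℝ)+1) / n) atTop (𝓝 A) := by
        have h2 : Tendsto (fun n : ℕ => A + A / n) atTop (𝓝 (A + 0)) :=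
          tendsto_const_nhds.add (tendsto_const_div_atTop_nhds_zero_nat A)
        rw [add_zero] at h2
        apply h2.congr'
        filter_upwards [eventually_ge_atTop 1] with n hn
        have hn0 : (n:ℝ) ≠ 0 := by positivity
        field_simp
      exact (h1.pow (k+1)).div_const _
    exact ge_of_tendsto htend (eventually_atTop.2 ⟨1, hmain⟩)

/-- Uniform Gronwall lemma. -/
theorem uniform_gronwall
    (t0 r a1 a2 a3 : ℝ) (hr : 0 < r) (ha1 : 0 < a1) (ha2 : 0 < a2) (ha3 : 0 < a3)
    (f g h f' : ℝ → ℝ)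
    (hf_nonneg : ∀ t, t0 ≤ t → 0 ≤ f t)
    (hg_nonneg : ∀ t, t0 ≤ t → 0 ≤ g t)
    (hh_nonneg : ∀ t, t0 ≤ t → 0 ≤ h t)
    (hf_deriv : ∀ t, t0 ≤ t → HasDerivAt f (f' t) t)
    (hineq : ∀ t, t0 ≤ t → f' t ≤ g t * f t + h t)
    (hf_int : ∀ t, t0 ≤ t → IntervalIntegrable f volume t (t + r))
    (hg_int : ∀ t, t0 ≤ t → IntervalIntegrable g volume t (t + r))
    (hh_int : ∀ t, t0 ≤ t → IntervalIntegrable h volume t (t + r))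
    (hf'_int : ∀ t, t0 ≤ t → IntervalIntegrable f' volume t (t + r))
    (hIf : ∀ t, t0 ≤ t → (∫ s in t..(t + r), f s) ≤ a1)
    (hIg : ∀ t, t0 ≤ t → (∫ s in t..(t + r), g s) ≤ a2)
    (hIh : ∀ t, t0 ≤ t → (∫ s in t..(t + r), h s) ≤ a3) :
    ∀ t, t0 ≤ t → f (t + r) ≤ (a1 / r + a3) * Real.exp a2 := by
  intro t ht
  set T := t + r with hT
  have htT : t ≤ T := by rw [hT]; linarith
  have hT0 : t0 ≤ T := le_trans ht htT
  have huIccT : Set.uIcc t T = Set.Icc t T := Set.uIcc_of_le htT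
  -- continuity of f on [t0, ∞)-type intervals
  have hfc : ContinuousOn f (Set.Icc t T) := fun x hx =>
    (hf_deriv x (ht.trans hx.1)).continuousAt.continuousWithinAt
  -- integrability on subintervals of [t, T]
  have hmono : ∀ {φ : ℝ → ℝ}, IntervalIntegrable φ volume t T →
      ∀ {c d : ℝ}, c ∈ Set.Icc t T → d ∈ Set.Icc t T → IntervalIntegrable φ volume c d := by
    intro φ hφ c d hc hd
    exact hφ.mono_set (Set.uIcc_subset_uIcc (huIccT.symm ▸ hc) (huIccT.symm ▸ hd))
  -- STEP A: for every s ∈ [t, T], f T ≤ (f s + a3) * exp a2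
  have stepA : ∀ s ∈ Set.Icc t T, f T ≤ (f s + a3) * Real.exp a2 := by
    intro s hs
    have hs0 : t0 ≤ s := ht.trans hs.1
    have hsT : s ≤ T := hs.2
    have hmemIcc : ∀ {v : ℝ}, v ∈ Set.Icc s T → v ∈ Set.Icc t T := by
      intro v hv; exact ⟨hs.1.trans hv.1, hv.2⟩
    set G : ℝ → ℝ := fun τ => ∫ x in s..τ, g x with hGdef
    -- bound M for f on [s, T]
    obtain ⟨M, hM⟩ := (isCompact_Icc (a := s) (b := T)).exists_bound_of_continuousOn
      (hfc.mono (fun x hx => hmemIcc hx))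
    have hMf : ∀ v ∈ Set.Icc s T, f v ≤ M := fun v hv =>
      (le_abs_self _).trans (by simpa [Real.norm_eq_abs] using hM v hv)
    have hM0 : 0 ≤ M := le_trans (hf_nonneg s hs0) (hMf s (Set.left_mem_Icc.2 hsT))
    set B : ℝ := f s + a3 with hBdef
    have hB0 : 0 ≤ B := by
      have := hf_nonneg s hs0; rw [hBdef]; linarith
    -- Step 1: integral inequality
    have step1 : ∀ v ∈ Set.Icc s T, f v ≤ B + ∫ τ in s..v, g τ * f τ := by
      intro v hv
      have hsv : s ≤ v := hv.1
      have huIccsv : Set.uIcc s v = Set.Icc s v := Set.uIcc_of_le hsv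
      have hftc : (∫ x in s..v, f' x) = f v - f s := by
        apply intervalIntegral.integral_eq_sub_of_hasDerivAt
        · intro x hx
          rw [huIccsv] at hx
          exact hf_deriv x (hs0.trans hx.1)
        · exact hmono (hf'_int t ht) (hmemIcc (Set.left_mem_Icc.2 hsT)) (hmemIcc hv)
      have hgf_int : IntervalIntegrable (fun τ => g τ * f τ) volume s v := by
        refine (hmono (hg_int t ht) (hmemIcc (Set.left_mem_Icc.2 hsT))
          (hmemIcc hv)).mul_continuousOn ?_
        refine hfc.mono ?_
        rw [huIccsv]
        intro x hx
        exact hmemIcc ⟨hx.1, hx.2.trans hv.2⟩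
      have hh_intsv : IntervalIntegrable h volume s v :=
        hmono (hh_int t ht) (hmemIcc (Set.left_mem_Icc.2 hsT)) (hmemIcc hv)
      have hmono1 : (∫ x in s..v, f' x) ≤ ∫ x in s..v, (g x * f x + h x) := by
        apply intervalIntegral.integral_mono_on hsv
          (hmono (hf'_int t ht) (hmemIcc (Set.left_mem_Icc.2 hsT)) (hmemIcc hv))
          (hgf_int.add hh_intsv)
        intro x hx
        exact hineq x (hs0.trans hx.1)
      rw [intervalIntegral.integral_add hgf_int hh_intsv] at hmono1
      have hh_le : (∫ x in s..v, h x) ≤ a3 := by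
        have e1 : (∫ x in t..s, h x) + (∫ x in s..v, h x) = ∫ x in t..v, h x :=
          integral_add_adjacent_intervals
            (hmono (hh_int t ht) (Set.left_mem_Icc.2 htT) (hmemIcc (Set.left_mem_Icc.2 hsT)))
            hh_intsv
        have e2 : (∫ x in t..v, h x) + (∫ x in v..T, h x) = ∫ x in t..T, h x :=
          integral_add_adjacent_intervals
            (hmono (hh_int t ht) (Set.left_mem_Icc.2 htT) (hmemIcc hv))
            (hmono (hh_int t ht) (hmemIcc hv) (Set.right_mem_Icc.2 htT))
        have n1 : 0 ≤ ∫ x in t..s, h x :=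
          intervalIntegral.integral_nonneg hs.1 (fun x hx => hh_nonneg x (ht.trans hx.1))
        have n2 : 0 ≤ ∫ x in v..T, h x :=
          intervalIntegral.integral_nonneg hv.2
            (fun x hx => hh_nonneg x (ht.trans ((hmemIcc hv).1.trans hx.1)))
        have := hIh t ht
        rw [← hT] at this
        linarith
      linarith
    have hgi : IntervalIntegrable g volume s T :=
      hmono (hg_int t ht) (hmemIcc (Set.left_mem_Icc.2 hsT)) (Set.right_mem_Icc.2 htT)
    have hg0sT : ∀ τ ∈ Set.Icc s T, 0 ≤ g τ := fun τ hτ => hg_nonneg τ (hs0.trans hτ.1)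
    have hGcont : ContinuousOn G (Set.Icc s T) := by
      have := intervalIntegral.continuousOn_primitive_interval' (μ := volume) (f := g)
        (b₁ := s) (b₂ := T) hgi (by rw [Set.uIcc_of_le hsT]; exact Set.left_mem_Icc.2 hsT)
      rwa [Set.uIcc_of_le hsT] at this
    have hG0 : ∀ v ∈ Set.Icc s T, 0 ≤ G v := by
      intro v hv
      exact intervalIntegral.integral_nonneg hv.1
        (fun x hx => hg_nonneg x (hs0.trans hx.1))
    -- Step 2: iteration
    have step2 : ∀ n : ℕ, ∀ v ∈ Set.Icc s T,
        f v ≤ B * (∑ k ∈ Finset.range n, G v ^ k / k.factorial)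
          + M * G v ^ n / n.factorial := by
      intro n
      induction n with
      | zero =>
          intro v hv
          simpa using hMf v hv
      | succ n ih =>
          intro v hv
          have hsv : s ≤ v := hv.1
          have hmemsv : ∀ {x : ℝ}, x ∈ Set.Icc s v → x ∈ Set.Icc s T := by
            intro x hx; exact ⟨hx.1, hx.2.trans hv.2⟩
          have hgiv : IntervalIntegrable g volume s v :=
            hmono (hg_int t ht) (hmemIcc (Set.left_mem_Icc.2 hsT)) (hmemIcc hv)
          have hgf_int : IntervalIntegrable (fun τ => g τ * f τ) volume s v := by
            refine hgiv.mul_continuousOn ?_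
            refine hfc.mono ?_
            rw [Set.uIcc_of_le hsv]
            intro x hx
            exact hmemIcc (hmemsv hx)
          -- integrability of g * (poly of G) pieces
          have hgGk_int : ∀ k : ℕ, IntervalIntegrable (fun τ => g τ * G τ ^ k) volume s v := by
            intro k
            refine hgiv.mul_continuousOn ?_
            refine (hGcont.mono ?_).pow k
            rw [Set.uIcc_of_le hsv]
            intro x hx
            exact hmemsv hx
          -- pointwise bound from induction hypothesis
          have hbound : ∀ x ∈ Set.Icc s v, g x * f x ≤
              g x * (B * (∑ k ∈ Finset.range n, G x ^ k / k.factorial)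
                + M * G x ^ n / n.factorial) := by
            intro x hx
            exact mul_le_mul_of_nonneg_left (ih x (hmemsv hx))
              (hg_nonneg x (hs0.trans hx.1))
          -- integrability of RHS integrand
          have hRHS_int : IntervalIntegrable (fun τ => g τ *
              (B * (∑ k ∈ Finset.range n, G τ ^ k / k.factorial)
                + M * G τ ^ n / n.factorial)) volume s v := by
            refine hgiv.mul_continuousOn ?_
            have hGc : ContinuousOn G (Set.uIcc s v) := by
              refine hGcont.mono ?_
              rw [Set.uIcc_of_le hsv]
              intro x hx
              exact hmemsv hx
            refine ContinuousOn.add ?_ ?_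
            · exact continuousOn_const.mul
                (continuousOn_finset_sum _ (fun k _ => ((hGc.pow k).div_const _)))
            · exact (continuousOn_const.mul (hGc.pow n)).div_const _
          -- the integral inequality chain
          have h1 : f v ≤ B + ∫ τ in s..v, g τ * f τ := step1 v hv
          have h2 : (∫ τ in s..v, g τ * f τ) ≤ ∫ τ in s..v, g τ *
              (B * (∑ k ∈ Finset.range n, G τ ^ k / k.factorial)
                + M * G τ ^ n / n.factorial) :=
            intervalIntegral.integral_mono_on hsv hgf_int hRHS_int hbound
          -- expand the RHS integral
          have h3 : (∫ τ in s..v, g τ *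
              (B * (∑ k ∈ Finset.range n, G τ ^ k / k.factorial)
                + M * G τ ^ n / n.factorial))
              = (∑ k ∈ Finset.range n, (B / k.factorial) * ∫ τ in s..v, g τ * G τ ^ k)
                + (M / n.factorial) * ∫ τ in s..v, g τ * G τ ^ n := by
            have hfun : ∀ τ : ℝ, g τ * (B * (∑ k ∈ Finset.range n, G τ ^ k / k.factorial)
                + M * G τ ^ n / n.factorial)
                = (∑ k ∈ Finset.range n, (B / k.factorial) * (g τ * G τ ^ k))
                  + (M / n.factorial) * (g τ * G τ ^ n) := by
              intro τ
              rw [mul_add, Finset.mul_sum, Finset.mul_sum]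
              congr 1
              · apply Finset.sum_congr rfl
                intro k _
                ring
              · ring
            simp_rw [hfun]
            have hsum_int : IntervalIntegrable
                (fun τ => ∑ k ∈ Finset.range n, (B / k.factorial) * (g τ * G τ ^ k))
                volume s v := by
              have := IntervalIntegrable.sum (μ := volume) (a := s) (b := v)
                (Finset.range n)
                (f := fun k => fun τ => (B / (k.factorial:ℝ)) * (g τ * G τ ^ k))
                (fun k _ => ((hgGk_int k).const_mul _))
              have heq : (∑ k ∈ Finset.range n, fun τ => (B / (k.factorial:ℝ)) * (g τ * G τ ^ k))
                  = fun τ => ∑ k ∈ Finset.range n, (B / (k.factorial:ℝ)) * (g τ * G τ ^ k) := by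
                funext τ
                simp
              rwa [heq] at this
            rw [intervalIntegral.integral_add hsum_int ((hgGk_int n).const_mul _)]
            rw [intervalIntegral.integral_finset_sum (fun k _ => ((hgGk_int k).const_mul _))]
            congr 1
            · apply Finset.sum_congr rfl
              intro k _
              rw [intervalIntegral.integral_const_mul]
            · rw [intervalIntegral.integral_const_mul]
          -- apply the key lemma to each piece
          have hkey : ∀ k : ℕ, (∫ τ in s..v, g τ * G τ ^ k) ≤ G v ^ (k+1) / (k+1) :=
            fun k => ug_key g hsv (fun τ hτ => hg_nonneg τ (hs0.trans hτ.1)) hgiv k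
          have h4 : (∑ k ∈ Finset.range n, (B / k.factorial) * ∫ τ in s..v, g τ * G τ ^ k)
              ≤ ∑ k ∈ Finset.range n, B * G v ^ (k+1) / (k+1).factorial := by
            apply Finset.sum_le_sum
            intro k _
            have hc : (0:ℝ) ≤ B / k.factorial := by positivity
            calc (B / k.factorial) * ∫ τ in s..v, g τ * G τ ^ k
                ≤ (B / k.factorial) * (G v ^ (k+1) / (k+1)) :=
                  mul_le_mul_of_nonneg_left (hkey k) hc
              _ = B * G v ^ (k+1) / (k+1).factorial := by
                  have hk : ((k.factorial : ℕ) : ℝ) ≠ 0 := by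
                    exact_mod_cast k.factorial_ne_zero
                  have hk1 : ((k:ℝ)+1) ≠ 0 := by positivity
                  rw [Nat.factorial_succ]
                  push_cast
                  rw [div_mul_div_comm, mul_comm ((k.factorial : ℕ) : ℝ) ((k:ℝ)+1)]
          have h5 : (M / n.factorial) * (∫ τ in s..v, g τ * G τ ^ n)
              ≤ M * G v ^ (n+1) / (n+1).factorial := by
            have hc : (0:ℝ) ≤ M / n.factorial := by positivity
            calc (M / n.factorial) * ∫ τ in s..v, g τ * G τ ^ n
                ≤ (M / n.factorial) * (G v ^ (n+1) / (n+1)) :=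
                  mul_le_mul_of_nonneg_left (hkey n) hc
              _ = M * G v ^ (n+1) / (n+1).factorial := by
                  have hk : ((n.factorial : ℕ) : ℝ) ≠ 0 := by
                    exact_mod_cast n.factorial_ne_zero
                  have hk1 : ((n:ℝ)+1) ≠ 0 := by positivity
                  rw [Nat.factorial_succ]
                  push_cast
                  rw [div_mul_div_comm, mul_comm ((n.factorial : ℕ) : ℝ) ((n:ℝ)+1)]
          -- reassemble
          have h6 : B + ∑ k ∈ Finset.range n, B * G v ^ (k+1) / (k+1).factorial
              = B * ∑ k ∈ Finset.range (n+1), G v ^ k / k.factorial := by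
            rw [Finset.sum_range_succ' (fun k => G v ^ k / (k.factorial : ℝ)) n]
            rw [mul_add, Finset.mul_sum]
            simp only [pow_zero, Nat.factorial_zero, Nat.cast_one, div_one, mul_one]
            rw [add_comm]
            congr 1
            apply Finset.sum_congr rfl
            intro k _
            rw [mul_div_assoc]
          calc f v ≤ B + ∫ τ in s..v, g τ * f τ := h1
            _ ≤ B + ((∑ k ∈ Finset.range n, (B / k.factorial) * ∫ τ in s..v, g τ * G τ ^ k)
                + (M / n.factorial) * ∫ τ in s..v, g τ * G τ ^ n) := by
                rw [← h3]; linarith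
            _ ≤ B + ((∑ k ∈ Finset.range n, B * G v ^ (k+1) / (k+1).factorial)
                + M * G v ^ (n+1) / (n+1).factorial) := by linarith
            _ = B * (∑ k ∈ Finset.range (n+1), G v ^ k / k.factorial)
                + M * G v ^ (n+1) / (n+1).factorial := by rw [← h6]; ring
    -- Step 3: pass to the limit at v = T
    have hGT_le : G T ≤ a2 := by
      have e1 : (∫ x in t..s, g x) + (∫ x in s..T, g x) = ∫ x in t..T, g x :=
        integral_add_adjacent_intervals
          (hmono (hg_int t ht) (Set.left_mem_Icc.2 htT) (hmemIcc (Set.left_mem_Icc.2 hsT)))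
          hgi
      have n1 : 0 ≤ ∫ x in t..s, g x :=
        intervalIntegral.integral_nonneg hs.1 (fun x hx => hg_nonneg x (ht.trans hx.1))
      have := hIg t ht
      rw [← hT] at this
      simp only [hGdef]
      linarith
    have hGT0 : 0 ≤ G T := hG0 T (Set.right_mem_Icc.2 hsT)
    have hfT : f T ≤ B * Real.exp (G T) := by
      have hseq : ∀ n : ℕ, f T ≤ B * Real.exp (G T) + M * (G T ^ n / n.factorial) := by
        intro n
        have := step2 n T (Set.right_mem_Icc.2 hsT)
        have hsum : (∑ k ∈ Finset.range n, G T ^ k / k.factorial) ≤ Real.exp (G T) :=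
          Real.sum_le_exp_of_nonneg hGT0 n
        have : f T ≤ B * Real.exp (G T) + M * G T ^ n / n.factorial := by
          calc f T ≤ B * (∑ k ∈ Finset.range n, G T ^ k / k.factorial)
              + M * G T ^ n / n.factorial := this
            _ ≤ B * Real.exp (G T) + M * G T ^ n / n.factorial := by
                have := mul_le_mul_of_nonneg_left hsum hB0
                linarith
        rw [mul_div_assoc] at this
        exact this
      have htend : Tendsto (fun n : ℕ => B * Real.exp (G T) + M * (G T ^ n / n.factorial))
          atTop (𝓝 (B * Real.exp (G T) + M * 0)) :=
        tendsto_const_nhds.add ((FloorSemiring.tendsto_pow_div_factorial_atTop (G T)).const_mul M)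
      rw [mul_zero, add_zero] at htend
      exact ge_of_tendsto htend (Eventually.of_forall hseq)
    calc f T ≤ B * Real.exp (G T) := hfT
      _ ≤ B * Real.exp a2 := by
          apply mul_le_mul_of_nonneg_left (Real.exp_le_exp.2 hGT_le) hB0
  -- STEP B: integrate over s ∈ [t, T]
  have hconst : (∫ _ in t..T, f T) = r * f T := by
    rw [intervalIntegral.integral_const, smul_eq_mul]
    congr 1
    rw [hT]; ring
  have hfint : IntervalIntegrable f volume t T := hf_int t ht
  have hint1 : IntervalIntegrable (fun s => (f s + a3) * Real.exp a2) volume t T :=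
    (hfint.add (intervalIntegrable_const)).mul_const _
  have hint0 : IntervalIntegrable (fun _ => f T) volume t T := intervalIntegrable_const
  have hmono2 : (∫ _ in t..T, f T) ≤ ∫ s in t..T, (f s + a3) * Real.exp a2 :=
    intervalIntegral.integral_mono_on htT hint0 hint1 (fun s hs => stepA s hs)
  have hval : (∫ s in t..T, (f s + a3) * Real.exp a2)
      = ((∫ s in t..T, f s) + r * a3) * Real.exp a2 := by
    rw [intervalIntegral.integral_mul_const,
      intervalIntegral.integral_add hfint intervalIntegrable_const,
      intervalIntegral.integral_const, smul_eq_mul]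
    congr 2
    rw [hT]; ring
  have hIf' := hIf t ht
  rw [← hT] at hIf'
  have hfinal : r * f T ≤ (a1 + r * a3) * Real.exp a2 := by
    rw [hconst] at hmono2
    rw [hval] at hmono2
    have hE : 0 < Real.exp a2 := Real.exp_pos a2
    nlinarith [hmono2]
  have : f T ≤ (a1 + r * a3) * Real.exp a2 / r := by
    rw [le_div_iff₀ hr]
    linarith
  calc f (t + r) = f T := by rw [hT]
    _ ≤ (a1 + r * a3) * Real.exp a2 / r := this
    _ = (a1 / r + a3) * Real.exp a2 := by field_simp
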